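/- With the setup above, the tangent curve satisfies the identity Ω(t) U₀†(t)(cosΦ(t) σₓ + sinΦ(t) σ_y)U₀(t) = −(T(t) × T'(t))·σ, where T(t)·σ = U₀†(t) σ_z U₀(t). -/

import Mathlib

open intervalIntegral Matrix Complex

/-- Cross product in ℝ³. -/
def cross3 (v w : Fin 3 → ℝ) : Fin 3 → ℝ :=
  ![v 1 * w 2 - v 2 * w 1, v 2 * w 0 - v 0 * w 2, v 0 * w 1 - v 1 * w 0]

/-- Pauli matrices. -/
def σx : Matrix (Fin 2) (Fin 2) ℂ := !![0, 1; 1, 0]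
def σy : Matrix (Fin 2) (Fin 2) ℂ := !![0, -Complex.I; Complex.I, 0]
def σz : Matrix (Fin 2) (Fin 2) ℂ := !![1, 0; 0, -1]

/-- The control Hamiltonian
`H₀(t) = (Ω/2)(cosΦ σx + sinΦ σy) + (Δ/2) σz`. -/
noncomputable def H0 (Ω Φ Δ : ℝ → ℝ) (t : ℝ) : Matrix (Fin 2) (Fin 2) ℂ :=
  (Ω t / 2) • (Real.cos (Φ t) • σx + Real.sin (Φ t) • σy) + (Δ t / 2) • σz

lemma pauli_comm (a b : Fin 3 → ℝ) :
    (a 0 • σx + a 1 • σy + a 2 • σz) * (b 0 • σx + b 1 • σy + b 2 • σz)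
      - (b 0 • σx + b 1 • σy + b 2 • σz) * (a 0 • σx + a 1 • σy + a 2 • σz)
    = (2 * Complex.I) • ((cross3 a b 0) • σx + (cross3 a b 1) • σy + (cross3 a b 2) • σz) := by
  ext i j
  fin_cases i <;> fin_cases j <;>
    simp [σx, σy, σz, cross3, Matrix.mul_apply, Fin.sum_univ_two, Complex.real_smul] <;>
    ring_nf <;> simp [Complex.ext_iff] <;> ring_nf

lemma L1' (w d c s : ℝ) :
    Complex.I • ((((w/2) • (c • σx + s • σy) + (d/2) • σz) : Matrix (Fin 2) (Fin 2) ℂ) * σz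
        - σz * ((w/2) • (c • σx + s • σy) + (d/2) • σz))
      = w • (c • σy - s • σx) := by
  ext i j
  fin_cases i <;> fin_cases j <;>
    simp [σx, σy, σz, Matrix.mul_apply, Fin.sum_univ_two, Complex.real_smul] <;>
    ring_nf <;> simp [Complex.ext_iff] <;> ring_nf

lemma L3' (c s : ℝ) :
    σz * ((c • σy - s • σx) : Matrix (Fin 2) (Fin 2) ℂ) - (c • σy - s • σx) * σz
      = (-2*Complex.I) • (c • σx + s • σy) := by
  ext i j
  fin_cases i <;> fin_cases j <;>
    simp [σx, σy, σz, Matrix.mul_apply, Fin.sum_univ_two, Complex.real_smul] <;>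
    ring_nf <;> simp [Complex.ext_iff] <;> ring_nf

lemma Xherm (c s : ℝ) : ((c • σy - s • σx) : Matrix (Fin 2) (Fin 2) ℂ)ᴴ = c • σy - s • σx := by
  ext i j
  fin_cases i <;> fin_cases j <;>
    simp [σx, σy, σz, Matrix.conjTranspose_apply, Complex.real_smul, _root_.map_mul,
      Complex.conj_I, Complex.conj_ofReal] <;> ring

lemma H0herm (Ω Φ Δ : ℝ → ℝ) (t : ℝ) (k l : Fin 2) :
    star (H0 Ω Φ Δ t k l) = H0 Ω Φ Δ t l k := by
  fin_cases k <;> fin_cases l <;>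
    simp [H0, σx, σy, σz, Complex.real_smul, Complex.star_def, _root_.map_mul, map_add,
      Complex.conj_I, Complex.conj_ofReal] <;>
    simp [← Complex.ofReal_cos, ← Complex.ofReal_sin, Complex.conj_ofReal]

lemma herm_decomp (A : Matrix (Fin 2) (Fin 2) ℂ) (hA : Aᴴ = A) (htr : A 1 1 = -(A 0 0)) :
    (A 0 1).re • σx + (-(A 0 1).im) • σy + (A 0 0).re • σz = A := by
  have h00 : star (A 0 0) = A 0 0 := (Matrix.conjTranspose_apply A 0 0).symm.trans (by rw [hA])
  have h10 : star (A 0 1) = A 1 0 := (Matrix.conjTranspose_apply A 0 1).symm.trans (by rw [hA])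
  rw [Complex.star_def, Complex.conj_eq_iff_im] at h00
  ext i j
  fin_cases i <;> fin_cases j <;>
    simp [σx, σy, σz, Complex.real_smul, Complex.ext_iff, h00, ← h10, htr,
      Complex.star_def]

lemma key_deriv (Ω Φ Δ : ℝ → ℝ) (U0 : ℝ → Matrix (Fin 2) (Fin 2) ℂ)
    (hU0ode : ∀ (i j : Fin 2) (t : ℝ), HasDerivAt (fun t' => U0 t' i j)
      (((-Complex.I) • (H0 Ω Φ Δ t * U0 t)) i j) t) (t : ℝ) (i j : Fin 2) :
    HasDerivAt (fun t' => ((U0 t')ᴴ * σz * U0 t') i j)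
      (((U0 t)ᴴ * (Complex.I • (H0 Ω Φ Δ t * σz - σz * H0 Ω Φ Δ t)) * U0 t) i j) t := by
  have hfun : (fun t' => ((U0 t')ᴴ * σz * U0 t') i j)
      = fun t' => star (U0 t' 0 i) * U0 t' 0 j - star (U0 t' 1 i) * U0 t' 1 j := by
    funext t'
    simp [Matrix.mul_apply, Fin.sum_univ_two, σz, Matrix.conjTranspose_apply]
    ring
  rw [hfun]
  have h := (((hU0ode 0 i t).star.fun_mul (hU0ode 0 j t)).fun_sub
    (((hU0ode 1 i t).star.fun_mul (hU0ode 1 j t))))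
  convert h using 1
  case e'_4 => rfl
  simp [Matrix.mul_apply, Fin.sum_univ_two, Matrix.conjTranspose_apply, Matrix.smul_apply,
    σz, smul_eq_mul, star_mul', star_add, star_neg, Complex.star_def, Complex.conj_I,
    _root_.map_mul, map_add, H0herm Ω Φ Δ t, Matrix.sub_apply]
  simp [Matrix.vecMul, dotProduct, Fin.sum_univ_two, σz]
  ring

theorem stmt_15 (Ω Φ Δ : ℝ → ℝ) (hΩ : Continuous Ω) (hΦ : Continuous Φ)
    (hΔ : Continuous Δ)
    (U0 : ℝ → Matrix (Fin 2) (Fin 2) ℂ) (hU00 : U0 0 = 1)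
    (hU0unitary : ∀ t : ℝ, (U0 t)ᴴ * U0 t = 1)
    (hU0ode : ∀ (i j : Fin 2) (t : ℝ), HasDerivAt (fun t' => U0 t' i j)
      (((-Complex.I) • (H0 Ω Φ Δ t * U0 t)) i j) t)
    (T : ℝ → (Fin 3 → ℝ)) (hTdiff : Differentiable ℝ T)
    (hT : ∀ t : ℝ, (T t 0) • σx + (T t 1) • σy + (T t 2) • σz =
      (U0 t)ᴴ * σz * U0 t) :
    ∀ t : ℝ,
      (Ω t) • ((U0 t)ᴴ * (Real.cos (Φ t) • σx + Real.sin (Φ t) • σy) * U0 t)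
        = -((cross3 (T t) (deriv T t) 0) • σx
            + (cross3 (T t) (deriv T t) 1) • σy
            + (cross3 (T t) (deriv T t) 2) • σz) := by
  intro t
  have hUW : U0 t * (U0 t)ᴴ = 1 := mul_eq_one_comm.mp (hU0unitary t)
  set c := Real.cos (Φ t) with hcdef
  set s := Real.sin (Φ t) with hsdef
  set N : Matrix (Fin 2) (Fin 2) ℂ := (Ω t) • ((U0 t)ᴴ * (c • σy - s • σx) * U0 t) with hN
  have hH0 : H0 Ω Φ Δ t = (Ω t / 2) • (c • σx + s • σy) + (Δ t / 2) • σz := rfl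
  have hL1 : (U0 t)ᴴ * (Complex.I • (H0 Ω Φ Δ t * σz - σz * H0 Ω Φ Δ t)) * U0 t = N := by
    rw [hN, hH0, L1' (Ω t) (Δ t) c s]
    simp [Matrix.mul_smul, Matrix.smul_mul]
  have key : ∀ i j : Fin 2, HasDerivAt (fun t' => ((U0 t')ᴴ * σz * U0 t') i j) (N i j) t := by
    intro i j
    have h := key_deriv Ω Φ Δ U0 hU0ode t i j
    rwa [hL1] at h
  have hT0 : ∀ t' : ℝ, T t' 0 = (((U0 t')ᴴ * σz * U0 t') 0 1).re := by
    intro t'; rw [← hT t']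
    simp [σx, σy, σz, Complex.real_smul]
  have hT1 : ∀ t' : ℝ, T t' 1 = -(((U0 t')ᴴ * σz * U0 t') 0 1).im := by
    intro t'; rw [← hT t']
    simp [σx, σy, σz, Complex.real_smul]
  have hT2 : ∀ t' : ℝ, T t' 2 = (((U0 t')ᴴ * σz * U0 t') 0 0).re := by
    intro t'; rw [← hT t']
    simp [σx, σy, σz, Complex.real_smul]
  set v : Fin 3 → ℝ := ![(N 0 1).re, -((N 0 1).im), (N 0 0).re] with hv
  have h0 : HasDerivAt (fun t' => T t' 0) (v 0) t := by
    have h := Complex.reCLM.hasFDerivAt.comp_hasDerivAt t (key 0 1)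
    simp only [Function.comp_def, Complex.reCLM_apply] at h
    simpa [hv, ← hT0] using h
  have h1 : HasDerivAt (fun t' => T t' 1) (v 1) t := by
    have h := (Complex.imCLM.hasFDerivAt.comp_hasDerivAt t (key 0 1)).fun_neg
    simp only [Function.comp_def, Complex.imCLM_apply] at h
    simpa [hv, ← hT1] using h
  have h2 : HasDerivAt (fun t' => T t' 2) (v 2) t := by
    have h := Complex.reCLM.hasFDerivAt.comp_hasDerivAt t (key 0 0)
    simp only [Function.comp_def, Complex.reCLM_apply] at h
    simpa [hv, ← hT2] using h
  have hder : HasDerivAt T v t := by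
    apply hasDerivAt_pi.mpr
    intro i
    fin_cases i
    · exact h0
    · exact h1
    · exact h2
  have hderivT : deriv T t = v := hder.deriv
  rw [hderivT]
  have hNherm : Nᴴ = N := by
    rw [hN]
    simp only [Matrix.conjTranspose_smul, star_trivial, Matrix.conjTranspose_mul,
      Matrix.conjTranspose_conjTranspose, Xherm c s, Matrix.mul_assoc]
  have hNtr : N 1 1 = -(N 0 0) := by
    have h1' : ((U0 t)ᴴ * (c • σy - s • σx) * U0 t).trace
        = ((c • σy - s • σx) : Matrix (Fin 2) (Fin 2) ℂ).trace := by
      rw [Matrix.trace_mul_comm, ← Matrix.mul_assoc, hUW, Matrix.one_mul]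
    have h2' : ((c • σy - s • σx) : Matrix (Fin 2) (Fin 2) ℂ).trace = 0 := by
      simp [σx, σy, Matrix.trace_fin_two]
    have h3 := h1'.trans h2'
    rw [Matrix.trace_fin_two] at h3
    have h4 : N 0 0 + N 1 1 = 0 := by
      rw [hN]; simp only [Matrix.smul_apply]; rw [← smul_add, h3, smul_zero]
    linear_combination h4
  have hvdecomp : v 0 • σx + v 1 • σy + v 2 • σz = N := by
    have h := herm_decomp N hNherm hNtr
    simpa [hv] using h
  have hcomm := pauli_comm (T t) v
  rw [hT t, hvdecomp] at hcomm
  have collapse : ∀ A B : Matrix (Fin 2) (Fin 2) ℂ,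
      ((U0 t)ᴴ * A * U0 t) * ((U0 t)ᴴ * B * U0 t) = (U0 t)ᴴ * (A * B) * U0 t := by
    intro A B
    have h4 : U0 t * ((U0 t)ᴴ * (B * U0 t)) = B * U0 t := by
      rw [← Matrix.mul_assoc, hUW, Matrix.one_mul]
    simp only [Matrix.mul_assoc, h4]
  have hMN : ((U0 t)ᴴ * σz * U0 t) * N - N * ((U0 t)ᴴ * σz * U0 t)
      = (2*Complex.I) • (-((Ω t) • ((U0 t)ᴴ * (c • σx + s • σy) * U0 t))) := by
    rw [hN, Matrix.mul_smul, Matrix.smul_mul, collapse, collapse, ← smul_sub,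
      ← Matrix.sub_mul, ← Matrix.mul_sub, L3' c s, Matrix.mul_smul, Matrix.smul_mul,
      smul_comm (Ω t)]
    rw [show (-2*Complex.I) = -(2*Complex.I) by ring, neg_smul, ← smul_neg, ← smul_neg]
  rw [hMN] at hcomm
  have h2I : (2*Complex.I) ≠ 0 := mul_ne_zero two_ne_zero Complex.I_ne_zero
  have h5 := smul_right_injective (Matrix (Fin 2) (Fin 2) ℂ) h2I hcomm
  rw [← h5, neg_neg]
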